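/- Let d≥1 and m≥1 be integers, let x₁,…,x_m ∈ ℝ^d, and set x_{m+1} = 0. Then Σ_{j=1}^m |x_j − x_{j+1}|² ≥ (2/(m(m+1))) · Σ_{j=1}^m |x_j|², where |·| is the Euclidean norm on ℝ^d. -/

import Mathlib

noncomputable section

open Finset

lemma telescope (m j : ℕ) (a : ℕ → ℝ) (ham : a m = 0) (hj : j ≤ m) :
    a j = ∑ k ∈ Finset.Ico j m, (a k - a (k + 1)) := by
  rw [Finset.sum_Ico_eq_sum_range]
  have : ∑ i ∈ Finset.range (m - j), (a (j + i) - a (j + i + 1))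
      = -∑ i ∈ Finset.range (m - j), ((fun i => a (j + i)) (i + 1) - (fun i => a (j + i)) i) := by
    rw [← Finset.sum_neg_distrib]
    exact Finset.sum_congr rfl fun i _ => by ring_nf
  rw [this, Finset.sum_range_sub (fun i => a (j + i))]
  simp [Nat.add_sub_cancel' hj, ham]

lemma keyscalar (m : ℕ) (a : ℕ → ℝ) (ham : a m = 0) :
    ∑ j ∈ Finset.range m, (a j) ^ 2
      ≤ ((m : ℝ) * ((m : ℝ) + 1) / 2) * ∑ k ∈ Finset.range m, (a k - a (k + 1)) ^ 2 := by
  set b : ℕ → ℝ := fun k => a k - a (k + 1) with hb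
  calc ∑ j ∈ Finset.range m, (a j) ^ 2
      = ∑ j ∈ Finset.range m, (∑ k ∈ Finset.Ico j m, b k) ^ 2 := by
        refine Finset.sum_congr rfl fun j hj => ?_
        rw [← telescope m j a ham (le_of_lt (Finset.mem_range.mp hj))]
    _ ≤ ∑ j ∈ Finset.range m, ∑ k ∈ Finset.Ico j m, ((m - j : ℕ) : ℝ) * (b k) ^ 2 := by
        refine Finset.sum_le_sum fun j _ => ?_
        rw [← Finset.mul_sum]
        have := sq_sum_le_card_mul_sum_sq (s := Finset.Ico j m) (f := b)
        simpa [Nat.card_Ico] using this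
    _ = ∑ k ∈ Finset.range m, ∑ j ∈ Finset.range (k + 1), ((m - j : ℕ) : ℝ) * (b k) ^ 2 := by
        rw [Finset.range_eq_Ico, Finset.sum_Ico_Ico_comm]
        simp only [Finset.range_eq_Ico]
    _ ≤ ∑ k ∈ Finset.range m, ((m : ℝ) * ((m : ℝ) + 1) / 2) * (b k) ^ 2 := by
        refine Finset.sum_le_sum fun k hk => ?_
        rw [← Finset.sum_mul]
        refine mul_le_mul_of_nonneg_right ?_ (sq_nonneg _)
        have hkm : k < m := Finset.mem_range.mp hk
        have h1 : ∑ j ∈ Finset.range (k + 1), ((m - j : ℕ) : ℝ)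
            = ((∑ j ∈ Finset.range (k + 1), (m - j) : ℕ) : ℝ) := by push_cast; rfl
        have h2 : (∑ j ∈ Finset.range (k + 1), (m - j)) * 2 ≤ m * (m + 1) := by
          have hsub : Finset.range (k + 1) ⊆ Finset.range m := by
            intro t ht; simp only [Finset.mem_range] at *; omega
          have := Finset.sum_le_sum_of_subset (f := fun j => m - j) hsub
          have hfull : ∑ j ∈ Finset.range m, (m - j) = ∑ j ∈ Finset.range m, (j + 1) := by
            rw [← Finset.sum_range_reflect]
            exact Finset.sum_congr rfl fun j hj => by
              simp only [Finset.mem_range] at hj; omega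
          have hgauss := Finset.sum_range_id_mul_two m
          rw [hfull, Finset.sum_add_distrib, Finset.sum_const, Finset.card_range,
            smul_eq_mul, mul_one] at this
          rcases m with _ | n
          · omega
          · simp only [Nat.succ_sub_one] at hgauss
            nlinarith [this, hgauss]
        rw [h1]
        have : ((∑ j ∈ Finset.range (k + 1), (m - j) : ℕ) : ℝ) * 2 ≤ (m : ℝ) * ((m : ℝ) + 1) := by
          exact_mod_cast h2
        linarith
    _ = ((m : ℝ) * ((m : ℝ) + 1) / 2) * ∑ k ∈ Finset.range m, (b k) ^ 2 := by
        rw [Finset.mul_sum]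

theorem stmt15
    (d m : ℕ) (hd : 1 ≤ d) (hm : 1 ≤ m) (x : Fin m → Fin d → ℝ) :
    (2 / ((m : ℝ) * ((m : ℝ) + 1))) * ∑ j, ∑ i, (x j i) ^ 2
      ≤ ∑ j : Fin m, ∑ i,
          (x j i - (if h : (j : ℕ) + 1 < m then x ⟨(j : ℕ) + 1, h⟩ i else 0)) ^ 2 := by
  have hmpos : (0 : ℝ) < (m : ℝ) * ((m : ℝ) + 1) := by positivity
  rw [Finset.sum_comm, Finset.sum_comm (s := Finset.univ) (t := Finset.univ)
    (f := fun j i => (x j i - (if h : (j : ℕ) + 1 < m then x ⟨(j : ℕ) + 1, h⟩ i else 0)) ^ 2)]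
  rw [Finset.mul_sum]
  refine Finset.sum_le_sum fun i _ => ?_
  set a : ℕ → ℝ := fun n => if h : n < m then x ⟨n, h⟩ i else 0 with ha
  have ham : a m = 0 := by simp [ha]
  have key := keyscalar m a ham
  have e1 : ∑ j : Fin m, (x j i) ^ 2 = ∑ j ∈ Finset.range m, (a j) ^ 2 := by
    rw [Finset.sum_range fun j => (a j) ^ 2]
    refine Finset.sum_congr rfl fun j _ => ?_
    simp [ha, j.isLt]
  have e2 : ∑ j : Fin m, (x j i - (if h : (j : ℕ) + 1 < m then x ⟨(j : ℕ) + 1, h⟩ i else 0)) ^ 2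
      = ∑ k ∈ Finset.range m, (a k - a (k + 1)) ^ 2 := by
    rw [Finset.sum_range]
    refine Finset.sum_congr rfl fun j _ => ?_
    simp only [ha]
    by_cases h : (j : ℕ) + 1 < m <;> simp [h, j.isLt]
  rw [e1, e2]
  rw [div_mul_eq_mul_div, div_le_iff₀ hmpos] at *
  nlinarith [key]

end
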